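/- (Simplicity of the eigenvalues.) Every eigenvalue of the Boussinesq spectral problem is geometrically simple: if λ is an eigenvalue and φ, ψ ∈ C⁴([0,l]) are two nontrivial solutions of (σ(x)φ'')'' − (q(x)φ')' = λρ(x)φ on [0,l] with φ(0) = φ''(0) = φ(l) = φ''(l) = 0 (and likewise for ψ), then there exists c ∈ ℝ, c ≠ 0, with ψ = c·φ. -/

import Mathlib

open Set intervalIntegral MeasureTheory Filter Topology

noncomputable section

/-- The fourth-order Boussinesq differential operator `φ ↦ (σ φ'')'' − (q φ')'`. -/
def boussinesqOp (σ q : ℝ → ℝ) (φ : ℝ → ℝ) : ℝ → ℝ :=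
  fun x => deriv (deriv (fun t => σ t * deriv (deriv φ) t)) x
    - deriv (fun t => q t * deriv φ t) x

/-- `φ` is a (nontrivial) eigenfunction of the Boussinesq spectral problem on `[0,l]`
with eigenvalue `lam`: it is `C⁴`, not identically zero on `[0,l]`, satisfies
`(σ φ'')'' − (q φ')' = lam ρ φ` on `[0,l]` and the boundary conditions
`φ(0) = φ''(0) = φ(l) = φ''(l) = 0`. -/
def IsBoussinesqEigenpair (σ q ρ : ℝ → ℝ) (l lam : ℝ) (φ : ℝ → ℝ) : Prop :=
  ContDiff ℝ 4 φ ∧ (∃ x ∈ Icc (0:ℝ) l, φ x ≠ 0) ∧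
    (∀ x ∈ Icc (0:ℝ) l, boussinesqOp σ q φ x = lam * ρ x * φ x) ∧
    φ 0 = 0 ∧ deriv (deriv φ) 0 = 0 ∧ φ l = 0 ∧ deriv (deriv φ) l = 0

/-- `lam` is an eigenvalue of the Boussinesq spectral problem on `[0,l]`. -/
def IsBoussinesqEigenvalue (σ q ρ : ℝ → ℝ) (l lam : ℝ) : Prop :=
  ∃ φ : ℝ → ℝ, IsBoussinesqEigenpair σ q ρ l lam φ

private lemma cd_step4 {f : ℝ → ℝ} (hf : ContDiff ℝ 4 f) : ContDiff ℝ 3 (deriv f) := by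
  have := contDiff_succ_iff_deriv (f := f) (n := 3) (𝕜 := ℝ)
  rw [show (3:WithTop ℕ∞) + 1 = 4 by norm_num] at this
  exact (this.mp hf).2.2

private lemma cd_step3 {f : ℝ → ℝ} (hf : ContDiff ℝ 3 f) : ContDiff ℝ 2 (deriv f) := by
  have := contDiff_succ_iff_deriv (f := f) (n := 2) (𝕜 := ℝ)
  rw [show (2:WithTop ℕ∞) + 1 = 3 by norm_num] at this
  exact (this.mp hf).2.2

private lemma cd_step2 {f : ℝ → ℝ} (hf : ContDiff ℝ 2 f) : ContDiff ℝ 1 (deriv f) := by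
  have := contDiff_succ_iff_deriv (f := f) (n := 1) (𝕜 := ℝ)
  rw [show (1:WithTop ℕ∞) + 1 = 2 by norm_num] at this
  exact (this.mp hf).2.2

private lemma boussinesq_unique
    {σ q ρ : ℝ → ℝ} {l lam : ℝ}
    (hl : (0:ℝ) ≤ l) (hσs : ContDiff ℝ 3 σ) (hqs : ContDiff ℝ 1 q) (hρc : Continuous ρ)
    {σ0 : ℝ} (hσ0 : 0 < σ0) (hσb : ∀ x ∈ Icc (0:ℝ) l, σ0 ≤ σ x)
    {u : ℝ → ℝ} (hu : ContDiff ℝ 4 u)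
    (heq : ∀ x ∈ Icc (0:ℝ) l, boussinesqOp σ q u x = lam * ρ x * u x)
    (h0 : u 0 = 0) (h1 : deriv u 0 = 0) (h2 : deriv (deriv u) 0 = 0)
    (h3 : deriv (fun t => σ t * deriv (deriv u) t) 0 = 0) :
    ∀ x ∈ Icc (0:ℝ) l, u x = 0 := by
  have hud : Differentiable ℝ u := hu.differentiable (by norm_num)
  have hu1 : ContDiff ℝ 3 (deriv u) := cd_step4 hu
  have hu1d : Differentiable ℝ (deriv u) := hu1.differentiable (by norm_num)
  have hu2 : ContDiff ℝ 2 (deriv (deriv u)) := cd_step3 hu1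
  set v : ℝ → ℝ := fun t => σ t * deriv (deriv u) t with hvdef
  have hv : ContDiff ℝ 2 v := (hσs.of_le (by norm_num)).mul hu2
  have hvd : Differentiable ℝ v := hv.differentiable (by norm_num)
  have hv1 : ContDiff ℝ 1 (deriv v) := cd_step2 hv
  have hv1d : Differentiable ℝ (deriv v) := hv1.differentiable (by norm_num)
  have hqd : Differentiable ℝ q := hqs.differentiable (by norm_num)
  have hq'c : Continuous (deriv q) := hqs.continuous_deriv le_rfl
  have hEq : ∀ x ∈ Icc (0:ℝ) l, deriv (deriv v) x
      = lam * ρ x * u x + deriv q x * deriv u x + q x * deriv (deriv u) x := by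
    intro x hx
    have h := heq x hx
    unfold boussinesqOp at h
    have hm : deriv (fun t => q t * deriv u t) x
        = deriv q x * deriv u x + q x * deriv (deriv u) x :=
      deriv_mul (hqd x) (hu1d x)
    rw [hm] at h
    linarith
  have hσpos : ∀ x ∈ Icc (0:ℝ) l, 0 < σ x := fun x hx => lt_of_lt_of_le hσ0 (hσb x hx)
  have hu2v : ∀ x ∈ Icc (0:ℝ) l, deriv (deriv u) x = v x / σ x := by
    intro x hx
    rw [eq_div_iff (ne_of_gt (hσpos x hx))]
    simp [hvdef, mul_comm]
  -- bounds
  obtain ⟨M, hM⟩ := (isCompact_Icc (a := (0:ℝ)) (b := l)).exists_bound_of_continuousOn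
    (f := fun x => |ρ x| + |q x| + |deriv q x|)
    (((hρc.abs.add (hqs.continuous.abs)).add hq'c.abs).continuousOn)
  have hMb : ∀ x ∈ Icc (0:ℝ) l, |ρ x| ≤ M ∧ |q x| ≤ M ∧ |deriv q x| ≤ M := by
    intro x hx
    have := hM x hx
    rw [Real.norm_eq_abs] at this
    have h1 : |ρ x| + |q x| + |deriv q x| ≤ M := le_trans (le_abs_self _) this
    have a1 := abs_nonneg (ρ x); have a2 := abs_nonneg (q x); have a3 := abs_nonneg (deriv q x)
    exact ⟨by linarith, by linarith, by linarith⟩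
  set K : ℝ := 1 + 1/σ0 + (|lam| * M + M + M/σ0) with hKdef
  have hM0 : 0 ≤ M := le_trans (abs_nonneg _) (hMb 0 ⟨le_rfl, hl⟩).1
  have hK1 : (1:ℝ) ≤ K := by
    have : 0 ≤ 1/σ0 := by positivity
    have h2 : 0 ≤ |lam| * M + M + M/σ0 := by positivity
    simp only [hKdef]; linarith
  have hK0 : 0 < K := lt_of_lt_of_le one_pos hK1
  -- the vector function
  set f : ℝ → ℝ × ℝ × ℝ × ℝ := fun x => (u x, deriv u x, v x, deriv v x) with hfdef
  set f' : ℝ → ℝ × ℝ × ℝ × ℝ :=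
    fun x => (deriv u x, deriv (deriv u) x, deriv v x, deriv (deriv v) x) with hf'def
  have hfd : ∀ x : ℝ, HasDerivAt f (f' x) x := fun x =>
    ((hud x).hasDerivAt.prodMk (((hu1d x).hasDerivAt).prodMk
      (((hvd x).hasDerivAt).prodMk ((hv1d x).hasDerivAt))))
  have hfc : ContinuousOn f (Icc 0 l) :=
    ((hu.continuous.prodMk (hu1.continuous.prodMk
      (hv.continuous.prodMk hv1.continuous)))).continuousOn
  have hf0 : ‖f 0‖ ≤ 0 := by
    have hv0 : v 0 = 0 := by simp [hvdef, h2]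
    have : f 0 = 0 := by simp [hfdef, h0, h1, hv0, h3, Prod.ext_iff]
    rw [this, norm_zero]
  have hnorm : ∀ x : ℝ, |u x| ≤ ‖f x‖ ∧ |deriv u x| ≤ ‖f x‖ ∧ |v x| ≤ ‖f x‖ ∧
      |deriv v x| ≤ ‖f x‖ := by
    intro x
    have e1 : |u x| = ‖(f x).1‖ := (Real.norm_eq_abs _).symm
    have e2 : |deriv u x| = ‖(f x).2.1‖ := (Real.norm_eq_abs _).symm
    have e3 : |v x| = ‖(f x).2.2.1‖ := (Real.norm_eq_abs _).symm
    have e4 : |deriv v x| = ‖(f x).2.2.2‖ := (Real.norm_eq_abs _).symm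
    refine ⟨e1 ▸ norm_fst_le _, ?_, ?_, ?_⟩
    · exact e2 ▸ le_trans (norm_fst_le _) (norm_snd_le _)
    · exact e3 ▸ le_trans (le_trans (norm_fst_le _) (norm_snd_le _)) (norm_snd_le _)
    · exact e4 ▸ le_trans (le_trans (norm_snd_le _) (norm_snd_le _)) (norm_snd_le _)
  have bound : ∀ x ∈ Ico (0:ℝ) l, ‖f' x‖ ≤ K * ‖f x‖ + 0 := by
    intro x hx
    have hx' : x ∈ Icc (0:ℝ) l := Ico_subset_Icc_self hx
    obtain ⟨n1, n2, n3, n4⟩ := hnorm x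
    have hfn : (0:ℝ) ≤ ‖f x‖ := norm_nonneg _
    have hσx := hσpos x hx'
    have hσbx := hσb x hx'
    obtain ⟨m1, m2, m3⟩ := hMb x hx'
    -- |u''| ≤ ‖f x‖ / σ0
    have hu2b : |deriv (deriv u) x| ≤ ‖f x‖ / σ0 := by
      rw [hu2v x hx', abs_div, abs_of_pos hσx]
      gcongr
    have hv2b : |deriv (deriv v) x| ≤ (|lam| * M + M + M/σ0) * ‖f x‖ := by
      rw [hEq x hx']
      have t1 : |lam * ρ x * u x| ≤ |lam| * M * ‖f x‖ := by
        rw [abs_mul, abs_mul]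
        have ha : |lam| * |ρ x| ≤ |lam| * M := mul_le_mul_of_nonneg_left m1 (abs_nonneg lam)
        exact mul_le_mul ha n1 (abs_nonneg _) (by positivity)
      have t2 : |deriv q x * deriv u x| ≤ M * ‖f x‖ := by
        rw [abs_mul]
        exact mul_le_mul m3 n2 (abs_nonneg _) (le_trans (abs_nonneg _) m3)
      have t3 : |q x * deriv (deriv u) x| ≤ M/σ0 * ‖f x‖ := by
        rw [abs_mul]
        calc |q x| * |deriv (deriv u) x| ≤ M * (‖f x‖ / σ0) :=
              mul_le_mul m2 hu2b (abs_nonneg _) hM0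
          _ = M/σ0 * ‖f x‖ := by ring
      calc |lam * ρ x * u x + deriv q x * deriv u x + q x * deriv (deriv u) x|
          ≤ |lam * ρ x * u x + deriv q x * deriv u x| + |q x * deriv (deriv u) x| := abs_add_le _ _
        _ ≤ |lam * ρ x * u x| + |deriv q x * deriv u x| + |q x * deriv (deriv u) x| := by
            have := abs_add_le (lam * ρ x * u x) (deriv q x * deriv u x); linarith
        _ ≤ (|lam| * M + M + M/σ0) * ‖f x‖ := by linarith [t1, t2, t3]
    have c1 : |deriv u x| ≤ K * ‖f x‖ :=
      le_trans n2 (le_mul_of_one_le_left hfn hK1)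
    have c2 : |deriv (deriv u) x| ≤ K * ‖f x‖ := by
      refine le_trans hu2b ?_
      have hs : 0 ≤ 1/σ0 := by positivity
      have h2 : 0 ≤ |lam| * M + M + M/σ0 := by positivity
      have : ‖f x‖ / σ0 = (1/σ0) * ‖f x‖ := by ring
      rw [this]
      have hKge : 1/σ0 ≤ K := by simp only [hKdef]; linarith
      exact mul_le_mul_of_nonneg_right hKge hfn
    have c3 : |deriv v x| ≤ K * ‖f x‖ :=
      le_trans n4 (le_mul_of_one_le_left hfn hK1)
    have c4 : |deriv (deriv v) x| ≤ K * ‖f x‖ := by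
      refine le_trans hv2b ?_
      have hs : 0 ≤ 1/σ0 := by positivity
      have hKge : |lam| * M + M + M/σ0 ≤ K := by simp only [hKdef]; linarith
      exact mul_le_mul_of_nonneg_right hKge hfn
    have : ‖f' x‖ = max |deriv u x| (max |deriv (deriv u) x|
        (max |deriv v x| |deriv (deriv v) x|)) := by
      simp [hf'def, Prod.norm_def, Real.norm_eq_abs]
    rw [this, add_zero]
    exact max_le c1 (max_le c2 (max_le c3 c4))
  have key := norm_le_gronwallBound_of_norm_deriv_right_le hfc
    (fun x _ => (hfd x).hasDerivWithinAt) hf0 bound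
  intro x hx
  have h := key x hx
  rw [gronwallBound_ε0_δ0] at h
  have := (hnorm x).1
  have : |u x| ≤ 0 := le_trans this h
  exact abs_eq_zero.mp (le_antisymm this (abs_nonneg _))

private lemma boussinesq_shoot
    {σ q ρ : ℝ → ℝ} {l lam : ℝ}
    (hl : 0 < l) (hσs : ContDiff ℝ 3 σ) (hqs : ContDiff ℝ 1 q) (hρc : Continuous ρ)
    {σ0 : ℝ} (hσ0 : 0 < σ0) (hσb : ∀ x ∈ Icc (0:ℝ) l, σ0 ≤ σ x)
    (hqb : ∀ x ∈ Icc (0:ℝ) l, 0 ≤ q x) (hρb : ∀ x ∈ Icc (0:ℝ) l, 0 ≤ ρ x)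
    (hlam : 0 ≤ lam)
    {u : ℝ → ℝ} (hu : ContDiff ℝ 4 u)
    (heq : ∀ x ∈ Icc (0:ℝ) l, boussinesqOp σ q u x = lam * ρ x * u x)
    (h0 : u 0 = 0) (h1 : deriv u 0 = 0) (h2 : deriv (deriv u) 0 = 0)
    (h3 : 0 < deriv (fun t => σ t * deriv (deriv u) t) 0) :
    0 < u l := by
  have hud : Differentiable ℝ u := hu.differentiable (by norm_num)
  have hu1 : ContDiff ℝ 3 (deriv u) := cd_step4 hu
  have hu1d : Differentiable ℝ (deriv u) := hu1.differentiable (by norm_num)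
  have hu2 : ContDiff ℝ 2 (deriv (deriv u)) := cd_step3 hu1
  set v : ℝ → ℝ := fun t => σ t * deriv (deriv u) t with hvdef
  have hv : ContDiff ℝ 2 v := (hσs.of_le (by norm_num)).mul hu2
  have hvd : Differentiable ℝ v := hv.differentiable (by norm_num)
  have hv1 : ContDiff ℝ 1 (deriv v) := cd_step2 hv
  have hv1d : Differentiable ℝ (deriv v) := hv1.differentiable (by norm_num)
  have hv2c : Continuous (deriv (deriv v)) := hv1.continuous_deriv le_rfl
  have hqd : Differentiable ℝ q := hqs.differentiable (by norm_num)
  have hqu : ContDiff ℝ 1 (fun t => q t * deriv u t) := hqs.mul (hu1.of_le (by norm_num))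
  have hqud : Differentiable ℝ (fun t => q t * deriv u t) := hqd.mul hu1d
  have hqu'c : Continuous (deriv (fun t => q t * deriv u t)) := hqu.continuous_deriv le_rfl
  have hσpos : ∀ x ∈ Icc (0:ℝ) l, 0 < σ x := fun x hx => lt_of_lt_of_le hσ0 (hσb x hx)
  have hv0 : v 0 = 0 := by simp [hvdef, h2]
  have hEq : ∀ x ∈ Icc (0:ℝ) l, deriv (deriv v) x
      = lam * ρ x * u x + deriv (fun t => q t * deriv u t) x := by
    intro x hx
    have h := heq x hx
    unfold boussinesqOp at h
    linarith
  -- the integral formula for deriv v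
  have hderiv_v : ∀ s ∈ Icc (0:ℝ) l,
      deriv v s = deriv v 0 + (∫ t in (0:ℝ)..s, lam * ρ t * u t) + q s * deriv u s := by
    intro s hs
    have hs0 : (0:ℝ) ≤ s := hs.1
    have huIcc : uIcc (0:ℝ) s = Icc 0 s := uIcc_of_le hs0
    have hsub : Icc (0:ℝ) s ⊆ Icc 0 l := Icc_subset_Icc le_rfl hs.2
    have A : ∫ t in (0:ℝ)..s, deriv (deriv v) t = deriv v s - deriv v 0 :=
      intervalIntegral.integral_eq_sub_of_hasDerivAt
        (fun t _ => (hv1d t).hasDerivAt) (hv2c.intervalIntegrable 0 s)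
    have B : ∫ t in (0:ℝ)..s, deriv (fun r => q r * deriv u r) t
        = q s * deriv u s - q 0 * deriv u 0 :=
      intervalIntegral.integral_eq_sub_of_hasDerivAt
        (fun t _ => (hqud t).hasDerivAt) (hqu'c.intervalIntegrable 0 s)
    have C : ∫ t in (0:ℝ)..s, deriv (deriv v) t
        = ∫ t in (0:ℝ)..s, (lam * ρ t * u t + deriv (fun r => q r * deriv u r) t) := by
      apply intervalIntegral.integral_congr
      intro t ht
      exact hEq t (hsub (huIcc ▸ ht))
    have D : ∫ t in (0:ℝ)..s, (lam * ρ t * u t + deriv (fun r => q r * deriv u r) t)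
        = (∫ t in (0:ℝ)..s, lam * ρ t * u t)
          + ∫ t in (0:ℝ)..s, deriv (fun r => q r * deriv u r) t :=
      intervalIntegral.integral_add
        (((continuous_const.mul hρc).mul hu.continuous).intervalIntegrable 0 s)
        (hqu'c.intervalIntegrable 0 s)
    rw [C, D, B] at A
    rw [h1] at A
    linarith
  -- positivity of v on (0, l]
  have hvpos : ∀ s ∈ Ioc (0:ℝ) l, 0 < v s := by
    by_contra hcon
    push_neg at hcon
    obtain ⟨s₀, hs₀, hvs₀⟩ := hcon
    -- eventually positive near 0
    have hslope : Tendsto (slope v 0) (𝓝[>] 0) (𝓝 (deriv v 0)) :=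
      ((hasDerivAt_iff_tendsto_slope.mp (hvd 0).hasDerivAt).mono_left
        (nhdsWithin_mono _ (fun x hx => ne_of_gt hx)))
    have hev : ∀ᶠ x in 𝓝[>] (0:ℝ), 0 < v x := by
      have h1' : ∀ᶠ x in 𝓝[>] (0:ℝ), 0 < slope v 0 x := hslope.eventually_const_lt h3
      have h2' : ∀ᶠ x in 𝓝[>] (0:ℝ), 0 < x :=
        eventually_nhdsWithin_of_forall (fun x hx => hx)
      filter_upwards [h1', h2'] with x hx1 hx2
      have hsl : slope v 0 x = v x / x := by
        rw [slope_def_field, hv0]; ring_nf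
      rw [hsl] at hx1
      have := mul_pos hx1 hx2
      rwa [div_mul_cancel₀ _ (ne_of_gt hx2)] at this
    obtain ⟨δ, hδmem, hδ⟩ := mem_nhdsGT_iff_exists_Ioo_subset.mp hev
    have hδ0 : (0:ℝ) < δ := hδmem
    have hδs₀ : δ ≤ s₀ := by
      by_contra hlt
      push_neg at hlt
      exact absurd (hδ ⟨hs₀.1, hlt⟩) (not_lt.mpr hvs₀)
    set B : Set ℝ := Icc δ l ∩ {x | v x ≤ 0} with hBdef
    have hBne : B.Nonempty := ⟨s₀, ⟨hδs₀, hs₀.2⟩, hvs₀⟩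
    have hBclosed : IsClosed B :=
      isClosed_Icc.inter (isClosed_le hv.continuous continuous_const)
    have hBbdd : BddBelow B := ⟨δ, fun x hx => hx.1.1⟩
    set t₀ := sInf B with ht₀def
    have ht₀B : t₀ ∈ B := hBclosed.csInf_mem hBne hBbdd
    have ht₀pos : 0 < t₀ := lt_of_lt_of_le hδ0 ht₀B.1.1
    have ht₀l : t₀ ≤ l := ht₀B.1.2
    have hvt₀ : v t₀ ≤ 0 := ht₀B.2
    have hsubl : Icc (0:ℝ) t₀ ⊆ Icc 0 l := Icc_subset_Icc le_rfl ht₀l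
    have hvmid : ∀ s ∈ Ioo (0:ℝ) t₀, 0 < v s := by
      intro s hs
      by_cases hsd : s < δ
      · exact hδ ⟨hs.1, hsd⟩
      · push_neg at hsd
        by_contra hvs
        push_neg at hvs
        have : s ∈ B := ⟨⟨hsd, le_trans (le_of_lt hs.2) ht₀l⟩, hvs⟩
        exact absurd (csInf_le hBbdd this) (not_le.mpr hs.2)
    have hu2nn : ∀ s ∈ Ioo (0:ℝ) t₀, 0 ≤ deriv (deriv u) s := by
      intro s hs
      have hsl : s ∈ Icc 0 l := hsubl ⟨le_of_lt hs.1, le_of_lt hs.2⟩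
      have hrw : deriv (deriv u) s = v s / σ s := by
        rw [eq_div_iff (ne_of_gt (hσpos s hsl))]; simp [hvdef, mul_comm]
      rw [hrw]
      exact div_nonneg (le_of_lt (hvmid s hs)) (le_of_lt (hσpos s hsl))
    have hmono1 : MonotoneOn (deriv u) (Icc 0 t₀) :=
      monotoneOn_of_deriv_nonneg (convex_Icc _ _) hu1.continuous.continuousOn
        hu1d.differentiableOn (by rw [interior_Icc]; exact hu2nn)
    have hu1nn : ∀ s ∈ Icc (0:ℝ) t₀, 0 ≤ deriv u s := fun s hs =>
      h1 ▸ hmono1 ⟨le_rfl, le_of_lt ht₀pos⟩ hs hs.1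
    have hmono0 : MonotoneOn u (Icc 0 t₀) :=
      monotoneOn_of_deriv_nonneg (convex_Icc _ _) hu.continuous.continuousOn
        hud.differentiableOn
        (by rw [interior_Icc]; exact fun s hs => hu1nn s ⟨le_of_lt hs.1, le_of_lt hs.2⟩)
    have hunn : ∀ s ∈ Icc (0:ℝ) t₀, 0 ≤ u s := fun s hs =>
      h0 ▸ hmono0 ⟨le_rfl, le_of_lt ht₀pos⟩ hs hs.1
    have hv'pos : ∀ s ∈ Ioo (0:ℝ) t₀, 0 < deriv v s := by
      intro s hs
      have hsl : s ∈ Icc 0 l := hsubl ⟨le_of_lt hs.1, le_of_lt hs.2⟩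
      rw [hderiv_v s hsl]
      have hint : 0 ≤ ∫ t in (0:ℝ)..s, lam * ρ t * u t := by
        apply intervalIntegral.integral_nonneg (le_of_lt hs.1)
        intro t ht
        have htl : t ∈ Icc 0 l := ⟨ht.1, le_trans ht.2 (le_trans (le_of_lt hs.2) ht₀l)⟩
        have htt₀ : t ∈ Icc 0 t₀ := ⟨ht.1, le_trans ht.2 (le_of_lt hs.2)⟩
        exact mul_nonneg (mul_nonneg hlam (hρb t htl)) (hunn t htt₀)
      have hq' : 0 ≤ q s * deriv u s :=
        mul_nonneg (hqb s hsl) (hu1nn s ⟨le_of_lt hs.1, le_of_lt hs.2⟩)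
      linarith
    have hsm : StrictMonoOn v (Icc 0 t₀) :=
      strictMonoOn_of_deriv_pos (convex_Icc _ _) hv.continuous.continuousOn
        (by rw [interior_Icc]; exact hv'pos)
    have hfin : v 0 < v t₀ := hsm ⟨le_rfl, le_of_lt ht₀pos⟩ ⟨le_of_lt ht₀pos, le_rfl⟩ ht₀pos
    rw [hv0] at hfin
    linarith
  -- final monotonicity on [0,l]
  have hu2pos : ∀ s ∈ Ioo (0:ℝ) l, 0 < deriv (deriv u) s := by
    intro s hs
    have hsl : s ∈ Icc 0 l := ⟨le_of_lt hs.1, le_of_lt hs.2⟩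
    have hrw : deriv (deriv u) s = v s / σ s := by
      rw [eq_div_iff (ne_of_gt (hσpos s hsl))]; simp [hvdef, mul_comm]
    rw [hrw]
    exact div_pos (hvpos s ⟨hs.1, le_of_lt hs.2⟩) (hσpos s hsl)
  have hsm1 : StrictMonoOn (deriv u) (Icc 0 l) :=
    strictMonoOn_of_deriv_pos (convex_Icc _ _) hu1.continuous.continuousOn
      (by rw [interior_Icc]; exact hu2pos)
  have hu1pos : ∀ s ∈ Ioo (0:ℝ) l, 0 < deriv u s := by
    intro s hs
    have := hsm1 ⟨le_rfl, le_of_lt hl⟩ ⟨le_of_lt hs.1, le_of_lt hs.2⟩ hs.1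
    rw [h1] at this
    exact this
  have hsm0 : StrictMonoOn u (Icc 0 l) :=
    strictMonoOn_of_deriv_pos (convex_Icc _ _) hu.continuous.continuousOn
      (by rw [interior_Icc]; exact hu1pos)
  have hfin := hsm0 ⟨le_rfl, le_of_lt hl⟩ ⟨le_of_lt hl, le_rfl⟩ hl
  rw [h0] at hfin
  exact hfin

private lemma boussinesq_lam_nonneg
    {σ q ρ : ℝ → ℝ} {l lam : ℝ} (hl : 0 < l)
    (hσs : ContDiff ℝ 3 σ) (hqs : ContDiff ℝ 1 q) (hρc : Continuous ρ)
    (hσnn : ∀ x ∈ Icc (0:ℝ) l, 0 ≤ σ x)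
    (hqb : ∀ x ∈ Icc (0:ℝ) l, 0 ≤ q x) (hρpos : ∀ x ∈ Icc (0:ℝ) l, 0 < ρ x)
    {φ : ℝ → ℝ} (hφ4 : ContDiff ℝ 4 φ) (hne : ∃ x ∈ Icc (0:ℝ) l, φ x ≠ 0)
    (heq : ∀ x ∈ Icc (0:ℝ) l, boussinesqOp σ q φ x = lam * ρ x * φ x)
    (hb0 : φ 0 = 0) (hb0' : deriv (deriv φ) 0 = 0)
    (hbl : φ l = 0) (hbl' : deriv (deriv φ) l = 0) :
    0 ≤ lam := by
  have hud : Differentiable ℝ φ := hφ4.differentiable (by norm_num)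
  have hu1 : ContDiff ℝ 3 (deriv φ) := cd_step4 hφ4
  have hu1d : Differentiable ℝ (deriv φ) := hu1.differentiable (by norm_num)
  have hu2 : ContDiff ℝ 2 (deriv (deriv φ)) := cd_step3 hu1
  have hu2d : Differentiable ℝ (deriv (deriv φ)) := hu2.differentiable (by norm_num)
  set v : ℝ → ℝ := fun t => σ t * deriv (deriv φ) t with hvdef
  have hv : ContDiff ℝ 2 v := (hσs.of_le (by norm_num)).mul hu2
  have hvd : Differentiable ℝ v := hv.differentiable (by norm_num)
  have hv1 : ContDiff ℝ 1 (deriv v) := cd_step2 hv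
  have hv1d : Differentiable ℝ (deriv v) := hv1.differentiable (by norm_num)
  have hv2c : Continuous (deriv (deriv v)) := hv1.continuous_deriv le_rfl
  have hqd : Differentiable ℝ q := hqs.differentiable (by norm_num)
  have hqu : ContDiff ℝ 1 (fun t => q t * deriv φ t) := hqs.mul (hu1.of_le (by norm_num))
  have hqud : Differentiable ℝ (fun t => q t * deriv φ t) := hqd.mul hu1d
  have hqu'c : Continuous (deriv (fun t => q t * deriv φ t)) := hqu.continuous_deriv le_rfl
  have hv0 : v 0 = 0 := by simp [hvdef, hb0']
  have hvl : v l = 0 := by simp [hvdef, hbl']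
  have huIcc : uIcc (0:ℝ) l = Icc 0 l := uIcc_of_le hl.le
  -- E := ∫ lam ρ φ²
  have hE1 : ∫ x in (0:ℝ)..l, lam * (ρ x * φ x ^ 2)
      = (∫ x in (0:ℝ)..l, φ x * deriv (deriv v) x)
        - ∫ x in (0:ℝ)..l, φ x * deriv (fun t => q t * deriv φ t) x := by
    rw [← intervalIntegral.integral_sub (f := fun x => φ x * deriv (deriv v) x)
      (g := fun x => φ x * deriv (fun t => q t * deriv φ t) x)
      (((hφ4.continuous.mul hv2c).intervalIntegrable 0 l :
        IntervalIntegrable (fun x => φ x * deriv (deriv v) x) volume 0 l))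
      (((hφ4.continuous.mul hqu'c).intervalIntegrable 0 l :
        IntervalIntegrable (fun x => φ x * deriv (fun t => q t * deriv φ t) x) volume 0 l))]
    apply intervalIntegral.integral_congr
    intro x hx
    have h := heq x (huIcc ▸ hx)
    unfold boussinesqOp at h
    calc lam * (ρ x * φ x ^ 2) = (lam * ρ x * φ x) * φ x := by ring
      _ = (deriv (deriv v) x - deriv (fun t => q t * deriv φ t) x) * φ x := by rw [← h]
      _ = φ x * deriv (deriv v) x - φ x * deriv (fun t => q t * deriv φ t) x := by ring
  -- first ibp
  have hA1 : ∫ x in (0:ℝ)..l, φ x * deriv (deriv v) x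
      = - ∫ x in (0:ℝ)..l, deriv φ x * deriv v x := by
    have := intervalIntegral.integral_mul_deriv_eq_deriv_mul
      (u := φ) (u' := deriv φ) (v := deriv v) (v' := deriv (deriv v)) (a := (0:ℝ)) (b := l)
      (fun x _ => (hud x).hasDerivAt) (fun x _ => (hv1d x).hasDerivAt)
      (hu1.continuous.intervalIntegrable 0 l) (hv2c.intervalIntegrable 0 l)
    rw [hb0, hbl] at this
    simpa using this
  have hA2 : ∫ x in (0:ℝ)..l, deriv φ x * deriv v x
      = - ∫ x in (0:ℝ)..l, deriv (deriv φ) x * v x := by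
    have := intervalIntegral.integral_mul_deriv_eq_deriv_mul
      (u := deriv φ) (u' := deriv (deriv φ)) (v := v) (v' := deriv v) (a := (0:ℝ)) (b := l)
      (fun x _ => (hu1d x).hasDerivAt) (fun x _ => (hvd x).hasDerivAt)
      (hu2.continuous.intervalIntegrable 0 l) (hv1.continuous.intervalIntegrable 0 l)
    rw [hv0, hvl] at this
    simpa using this
  have hA3 : ∫ x in (0:ℝ)..l, deriv (deriv φ) x * v x
      = ∫ x in (0:ℝ)..l, σ x * deriv (deriv φ) x ^ 2 := by
    apply intervalIntegral.integral_congr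
    intro x _
    simp only [hvdef]
    ring
  have hC : ∫ x in (0:ℝ)..l, φ x * deriv (fun t => q t * deriv φ t) x
      = - ∫ x in (0:ℝ)..l, q x * deriv φ x ^ 2 := by
    have := intervalIntegral.integral_mul_deriv_eq_deriv_mul
      (u := φ) (u' := deriv φ) (v := fun t => q t * deriv φ t)
      (v' := deriv (fun t => q t * deriv φ t)) (a := (0:ℝ)) (b := l)
      (fun x _ => (hud x).hasDerivAt) (fun x _ => (hqud x).hasDerivAt)
      (hu1.continuous.intervalIntegrable 0 l) (hqu'c.intervalIntegrable 0 l)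
    rw [hb0, hbl] at this
    rw [this]
    have : ∫ x in (0:ℝ)..l, deriv φ x * (q x * deriv φ x)
        = ∫ x in (0:ℝ)..l, q x * deriv φ x ^ 2 := by
      apply intervalIntegral.integral_congr
      intro x _
      ring
    rw [this]
    ring
  have hEnn : 0 ≤ ∫ x in (0:ℝ)..l, lam * (ρ x * φ x ^ 2) := by
    rw [hE1, hA1, hA2, hA3, hC]
    have t1 : 0 ≤ ∫ x in (0:ℝ)..l, σ x * deriv (deriv φ) x ^ 2 :=
      intervalIntegral.integral_nonneg hl.le
        (fun x hx => mul_nonneg (hσnn x hx) (sq_nonneg _))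
    have t2 : 0 ≤ ∫ x in (0:ℝ)..l, q x * deriv φ x ^ 2 :=
      intervalIntegral.integral_nonneg hl.le
        (fun x hx => mul_nonneg (hqb x hx) (sq_nonneg _))
    linarith
  have hEe : ∫ x in (0:ℝ)..l, lam * (ρ x * φ x ^ 2)
      = lam * ∫ x in (0:ℝ)..l, ρ x * φ x ^ 2 := intervalIntegral.integral_const_mul _ _
  -- positivity of ∫ ρ φ²
  obtain ⟨x₀, hx₀, hφx₀⟩ := hne
  have hx₀Ioo : x₀ ∈ Ioo (0:ℝ) l := by
    rcases eq_or_lt_of_le hx₀.1 with h | h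
    · exact absurd (h ▸ hb0) hφx₀
    rcases eq_or_lt_of_le hx₀.2 with h2 | h2
    · exact absurd (h2 ▸ hbl) hφx₀
    exact ⟨h, h2⟩
  have hPpos : 0 < ∫ x in (0:ℝ)..l, ρ x * φ x ^ 2 := by
    set g : ℝ → ℝ := fun x => ρ x * φ x ^ 2 with hgdef
    have hgc : Continuous g := hρc.mul (hφ4.continuous.pow 2)
    have hgx₀ : 0 < g x₀ :=
      mul_pos (hρpos x₀ hx₀) (by positivity)
    set U : Set ℝ := {x | 0 < g x} ∩ Ioo 0 l with hUdef
    have hUopen : IsOpen U := (isOpen_lt continuous_const hgc).inter isOpen_Ioo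
    have hUne : U.Nonempty := ⟨x₀, hgx₀, hx₀Ioo⟩
    have hg0 : 0 ≤ᵐ[volume.restrict (uIoc (0:ℝ) l)] g := by
      rw [uIoc_of_le hl.le, EventuallyLE, ae_restrict_iff' measurableSet_Ioc]
      filter_upwards with x hx
      exact mul_nonneg (le_of_lt (hρpos x ⟨le_of_lt hx.1, hx.2⟩)) (sq_nonneg _)
    rw [intervalIntegral.integral_pos_iff_support_of_nonneg_ae' hg0
      (hgc.intervalIntegrable 0 l)]
    refine ⟨hl, ?_⟩
    have hUsub : U ⊆ Function.support g ∩ Ioc 0 l := fun x hx =>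
      ⟨ne_of_gt hx.1, Ioo_subset_Ioc_self hx.2⟩
    exact lt_of_lt_of_le (hUopen.measure_pos volume hUne) (measure_mono hUsub)
  rw [hEe] at hEnn
  by_contra hneg
  push_neg at hneg
  exact absurd hEnn (not_le.mpr (mul_neg_of_neg_of_pos hneg hPpos))

private lemma deriv_comb {f g : ℝ → ℝ} (hf : Differentiable ℝ f) (hg : Differentiable ℝ g)
    (a b : ℝ) :
    deriv (fun x => a * f x + b * g x) = fun x => a * deriv f x + b * deriv g x := by
  funext x
  exact (((hf x).hasDerivAt.const_mul a).add ((hg x).hasDerivAt.const_mul b)).deriv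

private lemma boussinesq_comb
    {σ q ρ : ℝ → ℝ} {l lam : ℝ}
    (hσs : ContDiff ℝ 3 σ) (hqs : ContDiff ℝ 1 q)
    {φ ψ : ℝ → ℝ} (hφ4 : ContDiff ℝ 4 φ) (hψ4 : ContDiff ℝ 4 ψ)
    (heφ : ∀ x ∈ Icc (0:ℝ) l, boussinesqOp σ q φ x = lam * ρ x * φ x)
    (heψ : ∀ x ∈ Icc (0:ℝ) l, boussinesqOp σ q ψ x = lam * ρ x * ψ x)
    (a b : ℝ) :
    ∀ x ∈ Icc (0:ℝ) l, boussinesqOp σ q (fun t => a * φ t + b * ψ t) x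
      = lam * ρ x * (a * φ x + b * ψ x) := by
  have hφd : Differentiable ℝ φ := hφ4.differentiable (by norm_num)
  have hφ1 : ContDiff ℝ 3 (deriv φ) := cd_step4 hφ4
  have hφ1d : Differentiable ℝ (deriv φ) := hφ1.differentiable (by norm_num)
  have hφ2 : ContDiff ℝ 2 (deriv (deriv φ)) := cd_step3 hφ1
  have hψd : Differentiable ℝ ψ := hψ4.differentiable (by norm_num)
  have hψ1 : ContDiff ℝ 3 (deriv ψ) := cd_step4 hψ4
  have hψ1d : Differentiable ℝ (deriv ψ) := hψ1.differentiable (by norm_num)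
  have hψ2 : ContDiff ℝ 2 (deriv (deriv ψ)) := cd_step3 hψ1
  have hVφ : ContDiff ℝ 2 (fun t => σ t * deriv (deriv φ) t) :=
    (hσs.of_le (by norm_num)).mul hφ2
  have hVψ : ContDiff ℝ 2 (fun t => σ t * deriv (deriv ψ) t) :=
    (hσs.of_le (by norm_num)).mul hψ2
  have hVφd : Differentiable ℝ (fun t => σ t * deriv (deriv φ) t) :=
    hVφ.differentiable (by norm_num)
  have hVψd : Differentiable ℝ (fun t => σ t * deriv (deriv ψ) t) :=
    hVψ.differentiable (by norm_num)
  have hVφ1d : Differentiable ℝ (deriv (fun t => σ t * deriv (deriv φ) t)) :=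
    (cd_step2 hVφ).differentiable (by norm_num)
  have hVψ1d : Differentiable ℝ (deriv (fun t => σ t * deriv (deriv ψ) t)) :=
    (cd_step2 hVψ).differentiable (by norm_num)
  have hqd : Differentiable ℝ q := hqs.differentiable (by norm_num)
  have hqφd : Differentiable ℝ (fun t => q t * deriv φ t) := hqd.mul hφ1d
  have hqψd : Differentiable ℝ (fun t => q t * deriv ψ t) := hqd.mul hψ1d
  -- derivatives of the combination
  have d1 : deriv (fun t => a * φ t + b * ψ t) = fun t => a * deriv φ t + b * deriv ψ t :=
    deriv_comb hφd hψd a b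
  have d2 : deriv (deriv (fun t => a * φ t + b * ψ t))
      = fun t => a * deriv (deriv φ) t + b * deriv (deriv ψ) t := by
    rw [d1]; exact deriv_comb hφ1d hψ1d a b
  have hVeq : (fun t => σ t * deriv (deriv (fun s => a * φ s + b * ψ s)) t)
      = fun t => a * (σ t * deriv (deriv φ) t) + b * (σ t * deriv (deriv ψ) t) := by
    funext t
    rw [d2]
    ring
  have d3 : deriv (fun t => σ t * deriv (deriv (fun s => a * φ s + b * ψ s)) t)
      = fun t => a * deriv (fun s => σ s * deriv (deriv φ) s) t
        + b * deriv (fun s => σ s * deriv (deriv ψ) s) t := by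
    rw [hVeq]; exact deriv_comb hVφd hVψd a b
  have d4 : deriv (deriv (fun t => σ t * deriv (deriv (fun s => a * φ s + b * ψ s)) t))
      = fun t => a * deriv (deriv (fun s => σ s * deriv (deriv φ) s)) t
        + b * deriv (deriv (fun s => σ s * deriv (deriv ψ) s)) t := by
    rw [d3]; exact deriv_comb hVφ1d hVψ1d a b
  have hQeq : (fun t => q t * deriv (fun s => a * φ s + b * ψ s) t)
      = fun t => a * (q t * deriv φ t) + b * (q t * deriv ψ t) := by
    funext t
    rw [d1]
    ring
  have d5 : deriv (fun t => q t * deriv (fun s => a * φ s + b * ψ s) t)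
      = fun t => a * deriv (fun s => q s * deriv φ s) t
        + b * deriv (fun s => q s * deriv ψ s) t := by
    rw [hQeq]; exact deriv_comb hqφd hqψd a b
  intro x hx
  have h1 := heφ x hx
  have h2 := heψ x hx
  unfold boussinesqOp at h1 h2 ⊢
  rw [d4, d5]
  simp only
  linear_combination a * h1 + b * h2

private lemma boussinesq_shoot_ne
    {σ q ρ : ℝ → ℝ} {l lam : ℝ}
    (hl : 0 < l) (hσs : ContDiff ℝ 3 σ) (hqs : ContDiff ℝ 1 q) (hρc : Continuous ρ)
    {σ0 : ℝ} (hσ0 : 0 < σ0) (hσb : ∀ x ∈ Icc (0:ℝ) l, σ0 ≤ σ x)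
    (hqb : ∀ x ∈ Icc (0:ℝ) l, 0 ≤ q x) (hρb : ∀ x ∈ Icc (0:ℝ) l, 0 ≤ ρ x)
    (hlam : 0 ≤ lam)
    {u : ℝ → ℝ} (hu : ContDiff ℝ 4 u)
    (heq : ∀ x ∈ Icc (0:ℝ) l, boussinesqOp σ q u x = lam * ρ x * u x)
    (h0 : u 0 = 0) (h1 : deriv u 0 = 0) (h2 : deriv (deriv u) 0 = 0)
    (h3 : deriv (fun t => σ t * deriv (deriv u) t) 0 ≠ 0)
    (hul : u l = 0) : False := by
  rcases h3.lt_or_gt with hneg | hpos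
  · -- apply shoot to -u
    set w : ℝ → ℝ := fun t => (-1) * u t + 0 * u t with hwdef
    have hw4 : ContDiff ℝ 4 w := (contDiff_const.mul hu).add (contDiff_const.mul hu)
    have hweq := boussinesq_comb hσs hqs hu hu heq heq (-1) 0
    have hud : Differentiable ℝ u := hu.differentiable (by norm_num)
    have hu1d : Differentiable ℝ (deriv u) := (cd_step4 hu).differentiable (by norm_num)
    have d1 : deriv w = fun t => (-1) * deriv u t + 0 * deriv u t := deriv_comb hud hud (-1) 0
    have d2 : deriv (deriv w) = fun t => (-1) * deriv (deriv u) t + 0 * deriv (deriv u) t := by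
      rw [d1]; exact deriv_comb hu1d hu1d (-1) 0
    have hw0 : w 0 = 0 := by simp [hwdef, h0]
    have hw1 : deriv w 0 = 0 := by rw [d1]; simp [h1]
    have hw2 : deriv (deriv w) 0 = 0 := by rw [d2]; simp [h2]
    have hVeq : (fun t => σ t * deriv (deriv w) t)
        = fun t => (-1) * (σ t * deriv (deriv u) t) + 0 * (σ t * deriv (deriv u) t) := by
      funext t; rw [d2]; ring
    have hVud : Differentiable ℝ (fun t => σ t * deriv (deriv u) t) :=
      (((hσs.of_le (by norm_num : (2:WithTop ℕ∞) ≤ 3)).mul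
        (cd_step3 (cd_step4 hu)))).differentiable (by norm_num)
    have hw3 : 0 < deriv (fun t => σ t * deriv (deriv w) t) 0 := by
      rw [hVeq, deriv_comb hVud hVud (-1) 0]
      simp only
      linarith
    have := boussinesq_shoot hl hσs hqs hρc hσ0 hσb hqb hρb hlam hw4 hweq hw0 hw1 hw2 hw3
    have hwl : w l = 0 := by simp [hwdef, hul]
    rw [hwl] at this
    exact lt_irrefl 0 this
  · have := boussinesq_shoot hl hσs hqs hρc hσ0 hσb hqb hρb hlam hu heq h0 h1 h2 hpos
    rw [hul] at this
    exact lt_irrefl 0 this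

/-- **Simplicity of the eigenvalues.** If `lam` is an eigenvalue with eigenfunctions
`φ` and `ψ`, then `ψ = c • φ` on `[0,l]` for some nonzero constant `c`. -/
theorem boussinesq_eigenvalue_simple
    (l : ℝ) (hl : 0 < l)
    (ρ σ q : ℝ → ℝ)
    (hρs : ContDiff ℝ 3 ρ) (hσs : ContDiff ℝ 3 σ) (hqs : ContDiff ℝ 1 q)
    (ρ0 σ0 : ℝ) (hρ0 : 0 < ρ0) (hσ0 : 0 < σ0)
    (hρb : ∀ x ∈ Icc (0:ℝ) l, ρ0 ≤ ρ x)
    (hσb : ∀ x ∈ Icc (0:ℝ) l, σ0 ≤ σ x)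
    (hqb : ∀ x ∈ Icc (0:ℝ) l, 0 ≤ q x)
    (lam : ℝ) (φ ψ : ℝ → ℝ)
    (hφ : IsBoussinesqEigenpair σ q ρ l lam φ)
    (hψ : IsBoussinesqEigenpair σ q ρ l lam ψ) :
    ∃ c : ℝ, c ≠ 0 ∧ ∀ x ∈ Icc (0:ℝ) l, ψ x = c * φ x := by
  obtain ⟨hφ4, hφne, hφeq, hφ0, hφ2, hφl, hφ2l⟩ := hφ
  obtain ⟨hψ4, hψne, hψeq, hψ0, hψ2, hψl, hψ2l⟩ := hψ
  have hρc : Continuous ρ := hρs.continuous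
  have hρpos : ∀ x ∈ Icc (0:ℝ) l, 0 < ρ x := fun x hx => lt_of_lt_of_le hρ0 (hρb x hx)
  have hρnn : ∀ x ∈ Icc (0:ℝ) l, 0 ≤ ρ x := fun x hx => le_of_lt (hρpos x hx)
  have hσnn : ∀ x ∈ Icc (0:ℝ) l, 0 ≤ σ x := fun x hx =>
    le_of_lt (lt_of_lt_of_le hσ0 (hσb x hx))
  have hlam : 0 ≤ lam :=
    boussinesq_lam_nonneg hl hσs hqs hρc hσnn hqb hρpos hφ4 hφne hφeq hφ0 hφ2 hφl hφ2l
  -- first derivatives at 0 are nonzero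
  have key : ∀ u : ℝ → ℝ, ContDiff ℝ 4 u →
      (∀ x ∈ Icc (0:ℝ) l, boussinesqOp σ q u x = lam * ρ x * u x) →
      u 0 = 0 → deriv (deriv u) 0 = 0 → u l = 0 →
      deriv u 0 = 0 → ∀ x ∈ Icc (0:ℝ) l, u x = 0 := by
    intro u hu4 hueq hu0 hu2 hul hu1
    by_cases ha : deriv (fun t => σ t * deriv (deriv u) t) 0 = 0
    · exact boussinesq_unique hl.le hσs hqs hρc hσ0 hσb hu4 hueq hu0 hu1 hu2 ha
    · exact absurd (boussinesq_shoot_ne hl hσs hqs hρc hσ0 hσb hqb hρnn hlam hu4 hueq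
        hu0 hu1 hu2 ha hul) (fun h => h)
  have hφ'0 : deriv φ 0 ≠ 0 := by
    intro h
    obtain ⟨x, hx, hnex⟩ := hφne
    exact hnex (key φ hφ4 hφeq hφ0 hφ2 hφl h x hx)
  have hψ'0 : deriv ψ 0 ≠ 0 := by
    intro h
    obtain ⟨x, hx, hnex⟩ := hψne
    exact hnex (key ψ hψ4 hψeq hψ0 hψ2 hψl h x hx)
  set c : ℝ := deriv ψ 0 / deriv φ 0 with hcdef
  have hc0 : c ≠ 0 := div_ne_zero hψ'0 hφ'0
  refine ⟨c, hc0, ?_⟩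
  -- the combination χ = ψ - c φ vanishes identically
  set χ : ℝ → ℝ := fun t => 1 * ψ t + (-c) * φ t with hχdef
  have hχ4 : ContDiff ℝ 4 χ := (contDiff_const.mul hψ4).add (contDiff_const.mul hφ4)
  have hχeq := boussinesq_comb hσs hqs hψ4 hφ4 hψeq hφeq 1 (-c)
  have hψd : Differentiable ℝ ψ := hψ4.differentiable (by norm_num)
  have hφd : Differentiable ℝ φ := hφ4.differentiable (by norm_num)
  have hψ1d : Differentiable ℝ (deriv ψ) := (cd_step4 hψ4).differentiable (by norm_num)
  have hφ1d : Differentiable ℝ (deriv φ) := (cd_step4 hφ4).differentiable (by norm_num)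
  have d1 : deriv χ = fun t => 1 * deriv ψ t + (-c) * deriv φ t := deriv_comb hψd hφd 1 (-c)
  have d2 : deriv (deriv χ) = fun t => 1 * deriv (deriv ψ) t + (-c) * deriv (deriv φ) t := by
    rw [d1]; exact deriv_comb hψ1d hφ1d 1 (-c)
  have hχ0 : χ 0 = 0 := by simp [hχdef, hψ0, hφ0]
  have hχ1 : deriv χ 0 = 0 := by
    rw [d1]
    simp only [one_mul, neg_mul]
    rw [hcdef]
    field_simp
    ring
  have hχ2 : deriv (deriv χ) 0 = 0 := by rw [d2]; simp [hψ2, hφ2]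
  have hχl : χ l = 0 := by simp [hχdef, hψl, hφl]
  have hzero := key χ hχ4 hχeq hχ0 hχ2 hχl hχ1
  intro x hx
  have := hzero x hx
  simp only [hχdef] at this
  linarith
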